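/- Let K be a field, V a K-vector space of finite dimension N, and n ≥ 1 an integer. For a ∈ V^{⊗n}, let β(a) : V → V^{⊗(n+1)} be the linear map v ↦ a⊗v − v⊗a (the restriction to V of the inner derivation ad_a of the tensor algebra T(V)). Then S_n(β(a)) = ζ_n(a) − N·a, where S_n is the first-factor partial trace and ζ_n is the cyclic permutation of tensor factors. -/

import Mathlib

open scoped TensorProduct

/-- Decomposition of a linear map from a finite-dimensional space via a basis. -/
lemma linearMap_eq_sum_smulRight {K V M ι : Type*} [Field K] [AddCommGroup V] [Module K V]
    [AddCommGroup M] [Module K M] [Fintype ι] (b : Module.Basis ι K V) (f : V →ₗ[K] M) :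
    f = ∑ i, (b.coord i).smulRight (f (b i)) := by
  ext v
  rw [LinearMap.sum_apply]
  simp only [LinearMap.smulRight_apply, Module.Basis.coord_apply]
  conv_lhs => rw [← b.sum_repr v]
  rw [map_sum]
  simp [map_smul]

lemma smulRight_sub {K V M : Type*} [Field K] [AddCommGroup V] [Module K V]
    [AddCommGroup M] [Module K M] (α : V →ₗ[K] K) (x y : M) :
    α.smulRight (x - y) = α.smulRight x - α.smulRight y := by
  ext v; simp [smul_sub]

/-- Let `V` be a vector space of finite dimension `N` over a field `K` and `n ≥ 1`.  For
`a ∈ V^{⊗n}` let `β a : V → V^{⊗(n+1)}` be `v ↦ a⊗v − v⊗a` (the restriction to `V` of the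
inner derivation `ad_a` of the tensor algebra).  Then `S_n (β a) = ζ_n a − N • a`, where
`S_n` is the first-factor partial trace and `ζ_n` the cyclic permutation of tensor
factors. -/
theorem partial_trace_of_inner_derivation
    (K : Type*) [Field K]
    (V : Type*) [AddCommGroup V] [Module K V] [Module.Finite K V]
    (N : ℕ) (hN : Module.finrank K V = N)
    (n : ℕ) (hn : 1 ≤ n)
    -- the map `a ↦ β a`, `β a : v ↦ a⊗v − v⊗a`
    (β : (⨂[K] (_ : Fin n), V) →ₗ[K] (V →ₗ[K] ⨂[K] (_ : Fin (n + 1)), V))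
    (hβ : ∀ (w : Fin n → V) (v : V),
        β (PiTensorProduct.tprod K w) v
          = PiTensorProduct.tprod K (Fin.snoc w v)
            - PiTensorProduct.tprod K (Fin.cons v w))
    -- the first-factor partial trace `S_n`
    (S : (V →ₗ[K] ⨂[K] (_ : Fin (n + 1)), V) →ₗ[K] ⨂[K] (_ : Fin n), V)
    (hS : ∀ (α : V →ₗ[K] K) (w : Fin (n + 1) → V),
        S (α.smulRight (PiTensorProduct.tprod K w))
          = α (w 0) • PiTensorProduct.tprod K (fun i : Fin n => w i.succ))
    -- the cyclic permutation of tensor factors `ζ_n`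
    (ζ : Module.End K (⨂[K] (_ : Fin n), V))
    (hζ : ∀ v : Fin n → V,
        ζ (PiTensorProduct.tprod K v) = PiTensorProduct.tprod K (fun i => v (finRotate n i))) :
    ∀ a : ⨂[K] (_ : Fin n), V, S (β a) = ζ a - (N : K) • a := by
  obtain ⟨m, rfl⟩ : ∃ m, n = m + 1 := ⟨n - 1, by omega⟩
  set b := Module.finBasis K V with hb
  have key : ∀ w : Fin (m + 1) → V,
      S (β (PiTensorProduct.tprod K w)) = ζ (PiTensorProduct.tprod K w)
        - (N : K) • PiTensorProduct.tprod K w := by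
    intro w
    set u : Fin m → V := fun j => w j.succ with hu
    -- the linear map x ↦ tprod (snoc u x)
    set L : V →ₗ[K] (⨂[K] (_ : Fin (m + 1)), V) :=
      { toFun := fun x => PiTensorProduct.tprod K (Fin.snoc u x)
        map_add' := fun x y => MultilinearMap.snoc_add _ _ _ _
        map_smul' := fun c x => MultilinearMap.snoc_smul _ _ _ _ } with hL
    have hfun : ∀ x : V, (fun j : Fin (m + 1) => (Fin.snoc w x : Fin (m + 1 + 1) → V) j.succ)
        = (Fin.snoc u x : Fin (m + 1) → V) := by
      intro x
      funext j
      refine Fin.lastCases ?_ ?_ j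
      · simp [Fin.succ_last]
      · intro k
        rw [Fin.succ_castSucc]
        simp only [Fin.snoc_castSucc, hu]
    rw [linearMap_eq_sum_smulRight b (β (PiTensorProduct.tprod K w)), map_sum]
    have hterm : ∀ i, S ((b.coord i).smulRight (β (PiTensorProduct.tprod K w) (b i)))
        = b.coord i (w 0) • L (b i)
          - b.coord i (b i) • PiTensorProduct.tprod K w := by
      intro i
      rw [hβ, smulRight_sub, map_sub, hS, hS]
      have e0 : (Fin.snoc w (b i) : Fin (m + 1 + 1) → V) 0 = w 0 := by
        simp [Fin.snoc, Fin.castPred_zero]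
      have e2 : (Fin.cons (b i) w : Fin (m + 1 + 1) → V) 0 = b i := rfl
      have e3 : (fun j : Fin (m + 1) => (Fin.cons (b i) w : Fin (m + 1 + 1) → V) j.succ) = w :=
        funext fun j => Fin.cons_succ _ _ _
      rw [e0, e2, e3, hfun (b i)]
      rfl
    simp only [hterm]
    rw [Finset.sum_sub_distrib]
    have h2 : (∑ i, b.coord i (b i) • PiTensorProduct.tprod K w)
        = (N : K) • PiTensorProduct.tprod K w := by
      have : ∀ i, b.coord i (b i) = (1 : K) := by
        intro i; simp [Module.Basis.coord_apply]
      simp only [this, one_smul, Finset.sum_const, Finset.card_univ, Fintype.card_fin, hN]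
      simp [Nat.cast_smul_eq_nsmul]
    have h1 : (∑ i, b.coord i (w 0) • L (b i)) = ζ (PiTensorProduct.tprod K w) := by
      simp only [← map_smul, ← map_sum]
      simp only [Module.Basis.coord_apply]
      have : (∑ i, (b.repr (w 0)) i • b i) = w 0 := b.sum_repr (w 0)
      rw [this, hζ]
      show PiTensorProduct.tprod K _ = _
      congr 1
      funext j
      refine Fin.lastCases ?_ (fun k => ?_) j
      · rw [Fin.snoc_last, finRotate_succ_apply, Fin.last_add_one]
      · rw [Fin.snoc_castSucc, finRotate_succ_apply, Fin.coeSucc_eq_succ]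
    rw [h1, h2]
  intro a
  induction a using PiTensorProduct.induction_on with
  | smul_tprod c w =>
    rw [map_smul, map_smul, map_smul, key, smul_sub, smul_comm]
  | add x y hx hy =>
    rw [map_add, map_add, map_add, hx, hy, smul_add]
    abel
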